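/- arXiv:0912.3425 — 2 statements merged into one kernel-verified Lean document; each statement's English description precedes it below -/
import Mathlib

section
/- If (W, W') is an exchangeable pair of R^d-valued random vectors with E[W W^t] = Σ and E[W' - W | W] = -Λ W, then Λ Σ = Σ Λ^t. -/
open MeasureTheory ProbabilityTheory Matrix

lemma my_int_mul {Ω : Type*} [MeasurableSpace Ω] {μ : Measure Ω}
    [IsProbabilityMeasure μ]
    {f g : Ω → ℝ} (hf : MemLp f 2 μ) (hg : MemLp g 2 μ) :
    Integrable (fun ω => f ω * g ω) μ := by
  have : MemLp (f • g) 1 μ := @MemLp.smul _ _ _ _ _ _ _ _ _ _ _ _ _ _ hg hf ⟨by simp [ENNReal.inv_two_add_inv_two, one_div]⟩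
  exact memLp_one_iff_integrable.mp this

lemma my_comp {Ω : Type*} [MeasurableSpace Ω] {μ : Measure Ω} {d : ℕ}
    {W : Ω → Fin d → ℝ} (hW : MemLp W 2 μ) (i : Fin d) :
    MemLp (fun ω => W ω i) 2 μ := by
  have := (ContinuousLinearMap.proj (R := ℝ) (φ := fun _ : Fin d => ℝ) i).comp_memLp' hW
  exact this

/-- If `(W, W')` is an exchangeable pair in `ℝ^d` with `E[W Wᵀ] = Σ` and
`E[W' - W | W] = -ΛW`, then `ΛΣ = ΣΛᵀ`. -/
theorem exchangeable_pair_lambda_sigma_symm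
    {Ω : Type*} [MeasurableSpace Ω] (μ : Measure Ω) [IsProbabilityMeasure μ]
    {d : ℕ} (W W' : Ω → Fin d → ℝ)
    (hW : MeasureTheory.MemLp W 2 μ) (hW' : MeasureTheory.MemLp W' 2 μ)
    (hExch : IdentDistrib (fun ω => (W ω, W' ω)) (fun ω => (W' ω, W ω)) μ μ)
    (hmean : ∀ i, ∫ ω, W ω i ∂μ = 0)
    (S : Matrix (Fin d) (Fin d) ℝ)
    (hS : ∀ i j, S i j = ∫ ω, W ω i * W ω j ∂μ)
    (Λ : Matrix (Fin d) (Fin d) ℝ)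
    (hlin : ∀ i, μ[(fun ω => W' ω i - W ω i) |
        MeasurableSpace.comap W MeasurableSpace.pi]
      =ᵐ[μ] fun ω => -(Λ.mulVec (W ω) i)) :
    Λ * S = S * Λᵀ := by
  classical
  have hWi : ∀ i, MemLp (fun ω => W ω i) 2 μ := my_comp hW
  have hW'i : ∀ i, MemLp (fun ω => W' ω i) 2 μ := my_comp hW'
  have hint : ∀ i j, Integrable (fun ω => W ω i * W ω j) μ :=
    fun i j => my_int_mul (hWi i) (hWi j)
  have hSsym : ∀ i j, S i j = S j i := by
    intro i j; rw [hS, hS]; simp_rw [mul_comm]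
  -- key computation of (Λ * S) i j as an integral
  have hkey : ∀ i j, ∫ ω, Λ.mulVec (W ω) i * W ω j ∂μ = (Λ * S) i j := by
    intro i j
    have h1 : (fun ω => Λ.mulVec (W ω) i * W ω j)
        = fun ω => ∑ k, Λ i k * (W ω k * W ω j) := by
      funext ω
      rw [Matrix.mulVec, dotProduct, Finset.sum_mul]
      exact Finset.sum_congr rfl fun k _ => by ring
    rw [h1, integral_finset_sum _ (fun k _ => ((hint k j).const_mul _)),
      Matrix.mul_apply]
    refine Finset.sum_congr rfl fun k _ => ?_
    rw [integral_const_mul, hS]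
  have hsymmRHS : ∀ i j, (S * Λᵀ) i j = (Λ * S) j i := by
    intro i j
    rw [Matrix.mul_apply, Matrix.mul_apply]
    refine Finset.sum_congr rfl fun k _ => ?_
    rw [Matrix.transpose_apply, hSsym i k]
    ring
  by_cases hm : MeasurableSpace.comap W MeasurableSpace.pi ≤ ‹MeasurableSpace Ω›
  · -- main case
    -- symmetry of A i j = ∫ W'_i W_j from exchangeability
    have hAsym : ∀ i j, ∫ ω, W' ω i * W ω j ∂μ = ∫ ω, W' ω j * W ω i ∂μ := by
      intro i j
      have hmeas : Measurable (fun p : (Fin d → ℝ) × (Fin d → ℝ) => p.2 i * p.1 j) :=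
        ((measurable_pi_apply i).comp measurable_snd).mul
          ((measurable_pi_apply j).comp measurable_fst)
      have h1 := (hExch.comp hmeas).integral_eq
      simp only [Function.comp_def] at h1
      rw [h1]
      exact integral_congr_ae (Filter.Eventually.of_forall fun ω => mul_comm _ _)
    have hdiff : ∀ i j, ∫ ω, (W' ω i - W ω i) * W ω j ∂μ = -(Λ * S) i j := by
      intro i j
      set f : Ω → ℝ := fun ω => W' ω i - W ω i with hf_def
      set g : Ω → ℝ := fun ω => W ω j with hg_def
      have hfmem : MemLp f 2 μ := (hW'i i).sub (hWi i)
      have hgmem : MemLp g 2 μ := hWi j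
      have hfg : Integrable (g * f) μ := by
        have := my_int_mul hgmem hfmem
        exact this
      have hfint : Integrable f μ := hfmem.integrable (by norm_num)
      have hgm : StronglyMeasurable[MeasurableSpace.comap W MeasurableSpace.pi] g := by
        have hWm : Measurable[MeasurableSpace.comap W MeasurableSpace.pi] W := measurable_iff_comap_le.mpr le_rfl
        exact ((measurable_pi_apply j).comp hWm).stronglyMeasurable
      have hpull : μ[g * f|MeasurableSpace.comap W MeasurableSpace.pi] =ᵐ[μ] g * μ[f|MeasurableSpace.comap W MeasurableSpace.pi] :=
        condExp_mul_of_stronglyMeasurable_left hgm hfg hfint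
      haveI : SigmaFinite (μ.trim hm) := by
        have : IsFiniteMeasure (μ.trim hm) := isFiniteMeasure_trim hm
        exact this.toSigmaFinite
      calc ∫ ω, f ω * g ω ∂μ
          = ∫ ω, (g * f) ω ∂μ := by
            exact integral_congr_ae (Filter.Eventually.of_forall fun ω => mul_comm _ _)
        _ = ∫ ω, (μ[g * f|MeasurableSpace.comap W MeasurableSpace.pi]) ω ∂μ := (integral_condExp hm).symm
        _ = ∫ ω, (g * μ[f|MeasurableSpace.comap W MeasurableSpace.pi]) ω ∂μ := integral_congr_ae hpull
        _ = ∫ ω, g ω * (-(Λ.mulVec (W ω) i)) ∂μ := by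
            refine integral_congr_ae ?_
            filter_upwards [hlin i] with ω hω
            simp only [Pi.mul_apply]
            rw [hω]
        _ = -∫ ω, Λ.mulVec (W ω) i * W ω j ∂μ := by
            rw [← integral_neg]
            exact integral_congr_ae (Filter.Eventually.of_forall fun ω => by
              simp [g, mul_comm])
        _ = -(Λ * S) i j := by rw [hkey]
    -- expand hdiff: ∫ W'_i W_j - S i j = -(Λ*S) i j
    have hexpand : ∀ i j, ∫ ω, W' ω i * W ω j ∂μ - S i j = -(Λ * S) i j := by
      intro i j
      have h1 : Integrable (fun ω => W' ω i * W ω j) μ := my_int_mul (hW'i i) (hWi j)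
      have h2 := hint i j
      rw [hS i j, ← integral_sub h1 h2, ← hdiff i j]
      refine integral_congr_ae (Filter.Eventually.of_forall fun ω => by ring)
    ext i j
    rw [hsymmRHS i j]
    have e1 := hexpand i j
    have e2 := hexpand j i
    rw [hAsym j i] at e2
    rw [hSsym j i] at e2
    linarith
  · -- degenerate case: condexp is 0, so Λ.mulVec W = 0 a.e.
    have hz : ∀ i j, (Λ * S) i j = 0 := by
      intro i j
      have h0 := (hlin i).symm
      rw [condExp_of_not_le hm] at h0
      rw [← hkey i j]
      have : (fun ω => Λ.mulVec (W ω) i * W ω j) =ᵐ[μ] 0 := by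
        filter_upwards [h0] with ω hω
        simp only [Pi.zero_apply] at hω ⊢
        rw [neg_eq_zero] at hω
        rw [hω, zero_mul]
      rw [integral_congr_ae this]
      simp
    ext i j
    rw [hsymmRHS i j, hz i j, hz j i]
end

section
/- Let F = Σ_{n=1}^d J_n(f_n) where J_n(f_n) = Σ_{1≤i₁<…<i_n≤d} n! f_n(i₁,…,i_n) X_{i₁}⋯X_{i_n} and X₁,…,X_d are i.i.d. mean-zero random variables. If F' and J'_n(f_n) are obtained by replacing X_I (I uniform on {1,…,d}, independent) by an independent copy, then E[J'_n(f_n) − J_n(f_n) | W] = −(n/d) J_n(f_n), where W = (J₁(f₁),…,J_d(f_d)). -/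
open MeasureTheory ProbabilityTheory Finset

lemma prod_integrable_aux {Ω : Type*} [MeasurableSpace Ω] {μ : Measure Ω}
    [IsProbabilityMeasure μ] {ι : Type*} {f : ι → Ω → ℝ}
    (hIndep : iIndepFun (m := fun _ => (inferInstance : MeasurableSpace ℝ)) f μ)
    (hm : ∀ i, Measurable (f i)) (hi : ∀ i, Integrable (f i) μ) (s : Finset ι) :
    Integrable (fun ω => ∏ j ∈ s, f j ω) μ := by
  classical
  induction s using Finset.cons_induction with
  | empty => simp
  | cons a s ha ih =>
    have ih' : Integrable (∏ j ∈ s, f j) μ := by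
      have : (∏ j ∈ s, f j) = fun ω => ∏ j ∈ s, f j ω := by funext ω; simp
      rwa [this]
    have h1 : IndepFun (∏ j ∈ s, f j) (f a) μ :=
      hIndep.indepFun_finsetProd_of_notMem hm ha
    have h2 : Integrable ((f a) * (∏ j ∈ s, f j)) μ := h1.symm.integrable_mul (hi a) ih'
    have h3 : ((f a) * (∏ j ∈ s, f j)) = fun ω => ∏ j ∈ Finset.cons a s ha, f j ω := by
      funext ω; rw [Finset.prod_cons, Pi.mul_apply, Finset.prod_apply]
    rwa [h3] at h2

/-- For `F = ∑ₙ Jₙ(fₙ)` with `Jₙ(fₙ) = ∑_{i₁<…<iₙ} n! fₙ(i₁,…,iₙ) X_{i₁}⋯X_{iₙ}` built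
from i.i.d. mean-zero variables, and the coupling that replaces `X_I` (with `I` uniform,
independent) by an independent copy, one has `E[J'ₙ(fₙ) - Jₙ(fₙ) | W] = -(n/d) Jₙ(fₙ)`,
where `W = (J₁(f₁),…,J_d(f_d))`. -/
theorem chaos_embedding_linear_regression
    {Ω : Type*} [MeasurableSpace Ω] (μ : Measure Ω) [IsProbabilityMeasure μ]
    (d : ℕ) (hd : 0 < d)
    (X X' : Fin d → Ω → ℝ) (I : Ω → Fin d)
    (hXm : ∀ i, Measurable (X i)) (hX'm : ∀ i, Measurable (X' i))
    (hIm : Measurable I)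
    -- the variables X₁,…,X_d, X*₁,…,X*_d are independent, identically distributed
    -- with mean zero, and integrable
    (hIndep : iIndepFun (m := fun _ => (inferInstance : MeasurableSpace ℝ))
      (Sum.elim X X') μ)
    (hIdent : ∀ s t : Sum (Fin d) (Fin d),
      IdentDistrib (Sum.elim X X' s) (Sum.elim X X' t) μ μ)
    (hint : ∀ s, Integrable (Sum.elim X X' s) μ)
    (hmean : ∀ s, ∫ ω, Sum.elim X X' s ω ∂μ = 0)
    -- I is uniform on {1,…,d} and independent of everything else
    (hIIndep : IndepFun I (fun ω (s : Sum (Fin d) (Fin d)) => Sum.elim X X' s ω) μ)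
    (hIunif : ∀ i : Fin d, μ {ω | I ω = i} = (d : ENNReal)⁻¹)
    -- the coefficient functions and the multilinear sums Jₙ, J'ₙ
    (f : ℕ → Finset (Fin d) → ℝ)
    (J J' : ℕ → Ω → ℝ)
    (hJ : ∀ n ω, J n ω =
      ∑ α ∈ (Finset.univ.powersetCard n : Finset (Finset (Fin d))),
        (n.factorial : ℝ) * f n α * ∏ i ∈ α, X i ω)
    (hJ' : ∀ n ω, J' n ω =
      ∑ α ∈ (Finset.univ.powersetCard n : Finset (Finset (Fin d))),
        (n.factorial : ℝ) * f n α * ∏ i ∈ α, (if i = I ω then X' i ω else X i ω))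
    (hJint : ∀ n, Integrable (J n) μ) (hJ'int : ∀ n, Integrable (J' n) μ)
    -- the embedding vector W = (J₁(f₁),…,J_d(f_d))
    (W : Ω → Fin d → ℝ)
    (hW : ∀ ω (k : Fin d), W ω k = J ((k : ℕ) + 1) ω) :
    ∀ n : ℕ, 1 ≤ n → n ≤ d →
      μ[(fun ω => J' n ω - J n ω) | MeasurableSpace.comap W MeasurableSpace.pi]
        =ᵐ[μ] fun ω => -((n : ℝ) / d) * J n ω := by
  classical
  intro n hn1 hnd
  have hSm : ∀ s, Measurable (Sum.elim X X' s) := by rintro (a|b); exacts [hXm a, hX'm b]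
  have hJm : ∀ m, Measurable (J m) := by
    intro m
    have h : J m = fun ω => ∑ α ∈ (Finset.univ.powersetCard m : Finset (Finset (Fin d))),
        (m.factorial : ℝ) * f m α * ∏ i ∈ α, X i ω := funext (hJ m)
    rw [h]
    exact Finset.measurable_sum _ fun α _ =>
      (Finset.measurable_prod _ fun i _ => hXm i).const_mul _
  have hWm : Measurable W := by
    apply measurable_pi_lambda
    intro k
    have h : (fun ω => W ω k) = J ((k : ℕ) + 1) := funext fun ω => hW ω k
    rw [h]; exact hJm _
  have hm : MeasurableSpace.comap W MeasurableSpace.pi ≤ _ := hWm.comap_le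
  -- key independence facts
  have hufact : ∀ (i : Fin d) (ψ : ((Fin d ⊕ Fin d) → ℝ) → ℝ), Measurable ψ →
      ∫ ω, (if I ω = i then (1:ℝ) else 0) * ψ (fun t => Sum.elim X X' t ω) ∂μ
        = (d:ℝ)⁻¹ * ∫ ω, ψ (fun t => Sum.elim X X' t ω) ∂μ := by
    intro i ψ hψ
    have hφ : Measurable (fun k : Fin d => if k = i then (1:ℝ) else 0) :=
      Measurable.of_discrete
    have h1 : IndepFun (fun ω => if I ω = i then (1:ℝ) else 0)
        (fun ω => ψ (fun t => Sum.elim X X' t ω)) μ := hIIndep.comp hφ hψ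
    have h2 := h1.integral_mul_eq_mul_integral ((hφ.comp hIm).aestronglyMeasurable)
      ((hψ.comp (measurable_pi_lambda _ fun t => hSm t)).aestronglyMeasurable)
    have h3 : (fun ω => (if I ω = i then (1:ℝ) else 0) * ψ (fun t => Sum.elim X X' t ω))
        = ((fun ω => if I ω = i then (1:ℝ) else 0) * fun ω => ψ fun t => Sum.elim X X' t ω) :=
      rfl
    rw [h3, h2]
    congr 1
    have he : (fun ω => if I ω = i then (1:ℝ) else 0)
        = Set.indicator (I ⁻¹' {i}) (fun _ => (1:ℝ)) := by
      funext ω; by_cases h : I ω = i <;> simp [Set.indicator, h]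
    rw [he, integral_indicator_const _ (hIm (measurableSet_singleton i))]
    have h4 : I ⁻¹' {i} = {ω | I ω = i} := by ext ω; simp
    rw [h4, measureReal_def, hIunif i]
    simp [ENNReal.toReal_inv]
  have hX'zero : ∀ (i : Fin d) (ψ : ((Fin d) → ℝ) → ℝ), Measurable ψ →
      ∫ ω, X' i ω * ψ (fun k => X k ω) ∂μ = 0 := by
    intro i ψ hψ
    have hdisj : Disjoint ({Sum.inr i} : Finset (Fin d ⊕ Fin d)) (univ.image Sum.inl) := by
      simp
    have base := hIndep.indepFun_finset {Sum.inr i} (univ.image Sum.inl) hdisj hSm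
    have h1 : IndepFun (X' i) (fun ω => ψ (fun k => X k ω)) μ := by
      have h := base.comp (φ := fun w => w ⟨Sum.inr i, by simp⟩)
        (ψ := fun w => ψ (fun k => w ⟨Sum.inl k, by simp⟩))
        (measurable_pi_apply _ : Measurable fun w : ({Sum.inr i} : Finset (Fin d ⊕ Fin d)) → ℝ =>
          w ⟨Sum.inr i, by simp⟩)
        (hψ.comp (measurable_pi_lambda _ fun k => measurable_pi_apply _))
      exact h
    have h2 := h1.integral_mul_eq_mul_integral ((hX'm i).aestronglyMeasurable)
      ((hψ.comp (measurable_pi_lambda _ fun k => hXm k)).aestronglyMeasurable)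
    have h3 : (fun ω => X' i ω * ψ (fun k => X k ω))
        = ((X' i) * fun ω => ψ (fun k => X k ω)) := rfl
    rw [h3, h2]
    have h4 : integral μ (X' i) = 0 := hmean (Sum.inr i)
    rw [h4, zero_mul]
  haveI : SigmaFinite (μ.trim hm) := by
    have : IsFiniteMeasure (μ.trim hm) := isFiniteMeasure_trim hm
    infer_instance
  refine (ae_eq_condExp_of_forall_setIntegral_eq hm ((hJ'int n).sub (hJint n))
    (fun s _ _ => ((hJint n).const_mul _).integrableOn) ?_ ?_).symm
  · -- the set-integral identity
    rintro s ⟨A, hA, rfl⟩ -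
    set Xvec : Ω → Fin d → ℝ := fun ω k => X k ω with hXvecdef
    have hXvecm : Measurable Xvec := measurable_pi_lambda _ fun k => hXm k
    set gW : (Fin d → ℝ) → Fin d → ℝ := fun v k =>
      ∑ α ∈ (Finset.univ.powersetCard ((k:ℕ)+1) : Finset (Finset (Fin d))),
        ((((k:ℕ)+1).factorial : ℝ)) * f ((k:ℕ)+1) α * ∏ i ∈ α, v i with hgWdef
    have hgWm : Measurable gW := measurable_pi_lambda _ fun k =>
      Finset.measurable_sum _ fun α _ =>
        (Finset.measurable_prod _ fun i _ => measurable_pi_apply i).const_mul _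
    have hWeq : ∀ ω, gW (Xvec ω) = W ω := by
      intro ω; funext k; rw [hW ω k, hJ]
    set B := gW ⁻¹' A with hBdef
    have hB : MeasurableSet B := hgWm hA
    set e : Ω → ℝ := fun ω => B.indicator (fun _ => (1:ℝ)) (Xvec ω) with hedef
    have hem : Measurable e := (measurable_const.indicator hB).comp hXvecm
    have hebd : ∀ ω, ‖e ω‖ ≤ 1 := by
      intro ω; by_cases h : Xvec ω ∈ B <;>
        simp [hedef, Set.indicator_of_mem, Set.indicator_of_notMem, h]
    have hind : ∀ F : Ω → ℝ, ∫ x in W ⁻¹' A, F x ∂μ = ∫ x, e x * F x ∂μ := by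
      intro F
      rw [← integral_indicator (hWm hA)]
      congr 1; funext x
      by_cases hx : x ∈ W ⁻¹' A
      · have hxB : Xvec x ∈ B := by
          rw [hBdef]; simp only [Set.mem_preimage, hWeq x]; exact hx
        simp [Set.indicator_of_mem, hx, hxB, hedef]
      · have hxB : Xvec x ∉ B := by
          rw [hBdef]; simp only [Set.mem_preimage, hWeq x]; exact hx
        simp [Set.indicator_of_notMem, hx, hxB, hedef]
    set c : Finset (Fin d) → ℝ := fun α => (n.factorial : ℝ) * f n α with hcdef
    set P : Finset (Fin d) → Ω → ℝ := fun α ω => ∏ j ∈ α, X j ω with hPdef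
    set Q : Fin d → Finset (Fin d) → Ω → ℝ :=
      fun i α ω => ∏ j ∈ α, (if j = i then X' j ω else X j ω) with hQdef
    have hPint : ∀ α, Integrable (P α) μ := by
      intro α
      have h0 := prod_integrable_aux hIndep hSm hint (α.image Sum.inl)
      have h1 : (fun ω => ∏ t ∈ α.image Sum.inl, Sum.elim X X' t ω) = P α := by
        funext ω
        rw [Finset.prod_image (fun x _ y _ h => Sum.inl.inj h)]
        rfl
      rwa [h1] at h0
    have hQint : ∀ i α, Integrable (Q i α) μ := by
      intro i α
      set mf : Fin d → Fin d ⊕ Fin d := fun j => if j = i then Sum.inr j else Sum.inl j with hmf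
      have hminj : ∀ x ∈ α, ∀ y ∈ α, mf x = mf y → x = y := by
        intro x _ y _ hxy
        by_cases hx : x = i
        · by_cases hy : y = i
          · rw [hx, hy]
          · simp [hmf, hx, hy] at hxy
        · by_cases hy : y = i
          · simp [hmf, hx, hy] at hxy
          · simpa [hmf, hx, hy] using hxy
      have h0 := prod_integrable_aux hIndep hSm hint (α.image mf)
      have h1 : (fun ω => ∏ t ∈ α.image mf, Sum.elim X X' t ω) = Q i α := by
        funext ω
        rw [Finset.prod_image hminj]
        refine Finset.prod_congr rfl fun j _ => ?_
        by_cases h : j = i <;> simp [hmf, h]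
      rwa [h1] at h0
    have hQP : ∀ i α, i ∉ α → Q i α = P α := by
      intro i α hiα; funext ω
      refine Finset.prod_congr rfl fun j hj => ?_
      have : j ≠ i := fun h => hiα (h ▸ hj)
      simp [this]
    have hQsplit : ∀ i α, i ∈ α → ∀ ω, Q i α ω = X' i ω * ∏ j ∈ α.erase i, X j ω := by
      intro i α hiα ω
      rw [show Q i α ω = ∏ j ∈ α, (if j = i then X' j ω else X j ω) from rfl,
        ← Finset.mul_prod_erase α _ hiα, if_pos rfl]
      congr 1
      refine Finset.prod_congr rfl fun j hj => ?_
      simp [Finset.ne_of_mem_erase hj]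
    have hQPc : ∀ i α, Integrable (fun ω => c α * (Q i α ω - P α ω)) μ :=
      fun i α => (((hQint i α).sub (hPint α)).const_mul _)
    have heQP : ∀ i α, Integrable (fun ω => e ω * (c α * (Q i α ω - P α ω))) μ :=
      fun i α => (hQPc i α).bdd_mul hem.aestronglyMeasurable (ae_of_all _ hebd)
    have hePint : ∀ α, Integrable (fun ω => e ω * P α ω) μ :=
      fun α => (hPint α).bdd_mul hem.aestronglyMeasurable (ae_of_all _ hebd)
    have heQint : ∀ i α, Integrable (fun ω => e ω * Q i α ω) μ :=
      fun i α => (hQint i α).bdd_mul hem.aestronglyMeasurable (ae_of_all _ hebd)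
    have hterm : ∀ i α, Integrable
        (fun ω => (if I ω = i then (1:ℝ) else 0) * (e ω * (c α * (Q i α ω - P α ω)))) μ := by
      intro i α
      refine (heQP i α).bdd_mul ?_ (c := 1) (ae_of_all _ ?_)
      · exact ((Measurable.of_discrete
          (f := fun k : Fin d => if k = i then (1:ℝ) else 0)).comp hIm).aestronglyMeasurable
      · intro ω; by_cases h : I ω = i <;> simp [h]
    have heQzero : ∀ i α, i ∈ α → ∫ ω, e ω * Q i α ω ∂μ = 0 := by
      intro i α hiα
      have hψm : Measurable (fun v : Fin d → ℝ =>
          B.indicator (fun _ => (1:ℝ)) v * ∏ j ∈ α.erase i, v j) :=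
        (measurable_const.indicator hB).mul
          (Finset.measurable_prod _ fun j _ => measurable_pi_apply j)
      have h0 := hX'zero i _ hψm
      have hrw : (fun ω => e ω * Q i α ω)
          = fun ω => X' i ω * ((fun v : Fin d → ℝ =>
              B.indicator (fun _ => (1:ℝ)) v * ∏ j ∈ α.erase i, v j) (fun k => X k ω)) := by
        funext ω
        rw [hQsplit i α hiα ω]
        show e ω * (X' i ω * ∏ j ∈ α.erase i, X j ω)
          = X' i ω * (e ω * ∏ j ∈ α.erase i, X j ω)
        ring
      rw [hrw]
      exact h0
    -- rewrite both set integrals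
    rw [hind, hind]
    show (∫ x, e x * (-((n:ℝ)/d) * J n x) ∂μ) = ∫ x, e x * (J' n x - J n x) ∂μ
    have hLHS : ∫ x, e x * (-((n:ℝ)/d) * J n x) ∂μ
        = ∑ α ∈ (Finset.univ.powersetCard n : Finset (Finset (Fin d))),
            (-((n:ℝ)/d)) * (c α * ∫ ω, e ω * P α ω ∂μ) := by
      have h1 : (fun x => e x * (-((n:ℝ)/d) * J n x))
          = fun x => ∑ α ∈ (Finset.univ.powersetCard n : Finset (Finset (Fin d))),
              (-((n:ℝ)/d)) * (c α * (e x * P α x)) := by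
        funext x
        rw [hJ n x, Finset.mul_sum, Finset.mul_sum]
        refine Finset.sum_congr rfl fun α _ => ?_
        show e x * (-((n:ℝ)/d) * ((n.factorial : ℝ) * f n α * ∏ i ∈ α, X i x)) = _
        rw [show c α = (n.factorial : ℝ) * f n α from rfl,
          show P α x = ∏ i ∈ α, X i x from rfl]
        ring
      rw [h1, integral_finset_sum _ fun α _ => ((hePint α).const_mul _).const_mul _]
      refine Finset.sum_congr rfl fun α _ => ?_
      rw [MeasureTheory.integral_const_mul, MeasureTheory.integral_const_mul]
    have hpt : (fun x => e x * (J' n x - J n x))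
        = fun x => ∑ i : Fin d, ∑ α ∈ (Finset.univ.powersetCard n : Finset (Finset (Fin d))),
            (if I x = i then (1:ℝ) else 0) * (e x * (c α * (Q i α x - P α x))) := by
      funext x
      have h1 : J' n x - J n x
          = ∑ α ∈ (Finset.univ.powersetCard n : Finset (Finset (Fin d))),
              c α * (Q (I x) α x - P α x) := by
        rw [hJ' n x, hJ n x, ← Finset.sum_sub_distrib]
        exact Finset.sum_congr rfl fun α _ => (mul_sub _ _ _).symm
      rw [h1, Finset.mul_sum]
      symm
      rw [Finset.sum_comm]
      refine Finset.sum_congr rfl fun α _ => ?_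
      have h2 : ∀ i : Fin d, (if I x = i then (1:ℝ) else 0) * (e x * (c α * (Q i α x - P α x)))
          = if I x = i then e x * (c α * (Q i α x - P α x)) else 0 := by
        intro i; by_cases h : I x = i <;> simp [h]
      rw [Finset.sum_congr rfl fun i _ => h2 i, Finset.sum_ite_eq]
      simp
    have hRHS : ∫ x, e x * (J' n x - J n x) ∂μ
        = ∑ α ∈ (Finset.univ.powersetCard n : Finset (Finset (Fin d))),
            (n:ℝ) * ((d:ℝ)⁻¹ * -(c α * ∫ ω, e ω * P α ω ∂μ)) := by
      rw [hpt]
      rw [integral_finset_sum _ fun i _ => integrable_finset_sum _ fun α _ => hterm i α]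
      have hstep : ∀ i : Fin d,
          (∫ x, ∑ α ∈ (Finset.univ.powersetCard n : Finset (Finset (Fin d))),
            (if I x = i then (1:ℝ) else 0) * (e x * (c α * (Q i α x - P α x))) ∂μ)
          = ∑ α ∈ (Finset.univ.powersetCard n : Finset (Finset (Fin d))),
              (d:ℝ)⁻¹ * (if i ∈ α then -(c α * ∫ ω, e ω * P α ω ∂μ) else 0) := by
        intro i
        rw [integral_finset_sum _ fun α _ => hterm i α]
        refine Finset.sum_congr rfl fun α hα => ?_
        have hψm : Measurable (fun w : (Fin d ⊕ Fin d) → ℝ =>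
            B.indicator (fun _ => (1:ℝ)) (fun k => w (Sum.inl k)) *
              (c α * ((∏ j ∈ α, if j = i then w (Sum.inr j) else w (Sum.inl j))
                - ∏ j ∈ α, w (Sum.inl j)))) := by
          refine ((measurable_const.indicator hB).comp
            (measurable_pi_lambda _ fun k => measurable_pi_apply _)).mul ?_
          refine Measurable.const_mul (Measurable.sub ?_ ?_) _
          · refine Finset.measurable_prod _ fun j _ => ?_
            by_cases h : j = i <;> simp only [h, if_true, if_false] <;>
              exact measurable_pi_apply _
          · exact Finset.measurable_prod _ fun j _ => measurable_pi_apply _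
        have h2 : ∫ x, (if I x = i then (1:ℝ) else 0) * (e x * (c α * (Q i α x - P α x))) ∂μ
            = (d:ℝ)⁻¹ * ∫ x, e x * (c α * (Q i α x - P α x)) ∂μ := hufact i _ hψm
        rw [h2]
        congr 1
        by_cases hiα : i ∈ α
        · have hsub : ∫ x, e x * (c α * (Q i α x - P α x)) ∂μ
              = c α * ((∫ x, e x * Q i α x ∂μ) - ∫ x, e x * P α x ∂μ) := by
            rw [show (fun x => e x * (c α * (Q i α x - P α x)))
              = fun x => c α * (e x * Q i α x - e x * P α x) from funext fun x => by ring]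
            rw [MeasureTheory.integral_const_mul, integral_sub (heQint i α) (hePint α)]
          rw [hsub, heQzero i α hiα, if_pos hiα]
          ring
        · rw [if_neg hiα,
            show (fun x => e x * (c α * (Q i α x - P α x))) = fun _ => (0:ℝ) from
              funext fun x => by rw [hQP i α hiα]; ring]
          simp
      rw [Finset.sum_congr rfl fun i _ => hstep i, Finset.sum_comm]
      refine Finset.sum_congr rfl fun α hα => ?_
      have hcard : α.card = n := (Finset.mem_powersetCard.mp hα).2
      simp only [mul_ite, mul_zero]
      rw [Finset.sum_ite_mem, Finset.univ_inter, Finset.sum_const, hcard, nsmul_eq_mul]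
    rw [hLHS, hRHS]
    refine Finset.sum_congr rfl fun α _ => ?_
    ring
  · -- strong measurability of the target wrt σ(W)
    set k : Fin d := ⟨n-1, by omega⟩ with hk
    have hkn : ((k:ℕ) + 1) = n := by simp [hk]; omega
    have hgW : (fun ω => -((n:ℝ)/d) * J n ω)
        = (fun v : Fin d → ℝ => -((n:ℝ)/d) * v k) ∘ W := by
      funext ω
      simp only [Function.comp_apply, hW ω k, hkn]
    rw [hgW]
    have hWm' : Measurable[MeasurableSpace.comap W MeasurableSpace.pi] W :=
      measurable_iff_comap_le.mpr le_rfl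
    exact (((measurable_pi_apply k).const_mul _).comp hWm').stronglyMeasurable.aestronglyMeasurable
end
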